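/- Let K be a field, a, b ∈ K \ {0}, and σ the K-automorphism of K(x,y) with σ(x) = a/x, σ(y) = b/y. Define u = (x - a/x)/(xy - ab/(xy)) and v = (y - b/y)/(xy - ab/(xy)). Then u and v are fixed by σ, and the fixed field K(x,y)^⟨σ⟩ equals K(u,v). -/

import Mathlib

set_option maxHeartbeats 1000000
set_option synthInstance.maxHeartbeats 400000

open IntermediateField Module

private lemma mem_fixedField_of_fixed {K F : Type*} [Field K] [Field F] [Algebra K F]
    (σ : F ≃ₐ[K] F) {z : F} (h : σ z = z) :
    z ∈ IntermediateField.fixedField (Subgroup.zpowers σ) := by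
  have hst : Subgroup.zpowers σ ≤ MulAction.stabilizer (F ≃ₐ[K] F) z :=
    Subgroup.zpowers_le.mpr h
  intro g
  exact hst g.2

theorem stmt1 (K F : Type*) [Field K] [Field F] [Algebra K F]
    (a b : K) (ha : a ≠ 0) (hb : b ≠ 0)
    (x y : F) (hind : AlgebraicIndependent K ![x, y])
    (hgen : IntermediateField.adjoin K {x, y} = ⊤)
    (σ : F ≃ₐ[K] F)
    (hx : σ x = algebraMap K F a / x) (hy : σ y = algebraMap K F b / y)
    (u v : F)
    (hu : u = (x - algebraMap K F a / x) /
      (x * y - algebraMap K F (a * b) / (x * y)))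
    (hv : v = (y - algebraMap K F b / y) /
      (x * y - algebraMap K F (a * b) / (x * y))) :
    σ u = u ∧ σ v = v ∧
      IntermediateField.fixedField (Subgroup.zpowers σ) = IntermediateField.adjoin K {u, v} := by
  obtain ⟨A, hA⟩ : ∃ A', A' = algebraMap K F a := ⟨_, rfl⟩
  obtain ⟨B, hB⟩ : ∃ B', B' = algebraMap K F b := ⟨_, rfl⟩
  rw [← hA] at hx hu
  rw [← hB] at hy hv
  have hA0 : A ≠ 0 := by rw [hA]; exact (map_ne_zero (algebraMap K F)).mpr ha
  have hB0 : B ≠ 0 := by rw [hB]; exact (map_ne_zero (algebraMap K F)).mpr hb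
  have hsA : σ A = A := by rw [hA]; exact σ.commutes a
  have hsB : σ B = B := by rw [hB]; exact σ.commutes b
  have hAB : algebraMap K F (a * b) = A * B := by rw [hA, hB, map_mul]
  rw [hAB] at hu hv
  -- basic transcendence facts
  have htx : Transcendental K x := by simpa using hind.transcendental 0
  have hty : Transcendental K y := by simpa using hind.transcendental 1
  have hx0 : x ≠ 0 := fun h => htx (h ▸ isAlgebraic_zero)
  have hy0 : y ≠ 0 := fun h => hty (h ▸ isAlgebraic_zero)
  have hx2 : x ^ 2 ≠ A := by
    intro heq
    apply htx
    refine ⟨Polynomial.X ^ 2 - Polynomial.C a, ?_, ?_⟩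
    · intro h0
      have := congrArg (Polynomial.coeff · 2) h0
      simp at this
    · simp [heq, hA]
  have hy2 : y ^ 2 ≠ B := by
    intro heq
    apply hty
    refine ⟨Polynomial.X ^ 2 - Polynomial.C b, ?_, ?_⟩
    · intro h0
      have := congrArg (Polynomial.coeff · 2) h0
      simp at this
    · simp [heq, hB]
  have hD2 : x ^ 2 * y ^ 2 - A * B ≠ 0 := by
    intro heq
    have hinj := hind
    rw [algebraicIndependent_iff_injective_aeval] at hinj
    have h0 : (MvPolynomial.aeval (R := K) ![x, y])
        ((MvPolynomial.X 0 * MvPolynomial.X 1 : MvPolynomial (Fin 2) K) ^ 2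
          - MvPolynomial.C (a * b)) = (MvPolynomial.aeval (R := K) ![x, y]) 0 := by
      simp only [map_sub, map_pow, map_mul, MvPolynomial.aeval_X, MvPolynomial.aeval_C, map_zero,
        Matrix.cons_val_zero, Matrix.cons_val_one, Matrix.head_cons]
      rw [← hA, ← hB]
      linear_combination heq
    have := hinj h0
    apply mul_ne_zero ha hb
    have hc := congrArg MvPolynomial.constantCoeff this
    simpa using hc.symm
  have hD : x * y - A * B / (x * y) ≠ 0 := by
    intro h
    apply hD2
    rw [sub_eq_zero, eq_div_iff (mul_ne_zero hx0 hy0)] at h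
    rw [sub_eq_zero]
    linear_combination h
  -- σ fixes u and v
  have hsu : σ u = u := by
    have hnum : σ (x - A / x) = -(x - A / x) := by
      rw [map_sub, map_div₀, hx, hsA]
      field_simp
      ring
    have hden : σ (x * y - A * B / (x * y)) = -(x * y - A * B / (x * y)) := by
      rw [map_sub, map_div₀, map_mul, map_mul, hx, hy, hsA, hsB]
      field_simp
      ring
    rw [hu, map_div₀, hnum, hden, neg_div_neg_eq]
  have hsv : σ v = v := by
    have hnum : σ (y - B / y) = -(y - B / y) := by
      rw [map_sub, map_div₀, hy, hsB]
      field_simp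
      ring
    have hden : σ (x * y - A * B / (x * y)) = -(x * y - A * B / (x * y)) := by
      rw [map_sub, map_div₀, map_mul, map_mul, hx, hy, hsA, hsB]
      field_simp
      ring
    rw [hv, map_div₀, hnum, hden, neg_div_neg_eq]
  refine ⟨hsu, hsv, ?_⟩
  -- nicer formulas for u and v
  have hu' : u = y * (x ^ 2 - A) / (x ^ 2 * y ^ 2 - A * B) := by
    rw [hu, div_eq_div_iff hD hD2]
    field_simp
  have hv' : v = x * (y ^ 2 - B) / (x ^ 2 * y ^ 2 - A * B) := by
    rw [hv, div_eq_div_iff hD hD2]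
    field_simp
  have hu0 : u ≠ 0 := by
    rw [hu']
    exact div_ne_zero (mul_ne_zero hy0 (sub_ne_zero.mpr hx2)) hD2
  have hv0 : v ≠ 0 := by
    rw [hv']
    exact div_ne_zero (mul_ne_zero hx0 (sub_ne_zero.mpr hy2)) hD2
  have huv0 : u * v ≠ 0 := mul_ne_zero hu0 hv0
  -- key identities
  have hX : x = u * (x * y) + A * v := by
    rw [hu', hv']; field_simp; ring
  have hY : y = B * u + v * (x * y) := by
    rw [hu', hv', mul_div_assoc', div_mul_eq_mul_div, ← add_div, eq_div_iff hD2]; ring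
  have h3 : x * y = (u * (x * y) + A * v) * (B * u + v * (x * y)) :=
    congrArg₂ (fun p q => p * q) hX hY
  have hquad : u * v * (x * y) ^ 2 + (B * u ^ 2 + A * v ^ 2 - 1) * (x * y)
      + A * B * (u * v) = 0 := by
    linear_combination -h3
  -- the intermediate fields
  set E : IntermediateField K F := IntermediateField.adjoin K {u, v} with hE
  set L : IntermediateField K F := IntermediateField.fixedField (Subgroup.zpowers σ) with hL
  have hum : u ∈ E := IntermediateField.subset_adjoin K {u, v} (Set.mem_insert _ _)
  have hvm : v ∈ E := IntermediateField.subset_adjoin K {u, v} (Set.mem_insert_of_mem _ rfl)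
  have hAm : A ∈ E := by rw [hA]; exact E.algebraMap_mem a
  have hBm : B ∈ E := by rw [hB]; exact E.algebraMap_mem b
  -- s = x * y is quadratic over E
  obtain ⟨c₁, hc₁⟩ : ∃ c : E, (c : F) = (B * u ^ 2 + A * v ^ 2 - 1) / (u * v) :=
    ⟨⟨_, div_mem (sub_mem (add_mem (mul_mem hBm (pow_mem hum 2))
      (mul_mem hAm (pow_mem hvm 2))) (one_mem _)) (mul_mem hum hvm)⟩, rfl⟩
  obtain ⟨c₀, hc₀⟩ : ∃ c : E, (c : F) = A * B := ⟨⟨_, mul_mem hAm hBm⟩, rfl⟩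
  set q : Polynomial E := Polynomial.X ^ 2 + (Polynomial.C c₁ * Polynomial.X
    + Polynomial.C c₀) with hqdef
  have hqmonic : q.Monic := Polynomial.monic_X_pow_add Polynomial.degree_linear_lt
  have hqdeg : q.natDegree ≤ 2 := by
    apply Polynomial.natDegree_le_iff_degree_le.mpr
    rw [hqdef]
    refine (Polynomial.degree_add_le _ _).trans (max_le (le_of_eq (Polynomial.degree_X_pow 2))
      (Polynomial.degree_linear_le.trans (by norm_num)))
  have hqeval : Polynomial.aeval (x * y) q = 0 := by
    rw [hqdef]
    simp only [map_add, map_pow, map_mul, Polynomial.aeval_X, Polynomial.aeval_C]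
    rw [IntermediateField.algebraMap_apply, IntermediateField.algebraMap_apply, hc₁, hc₀]
    field_simp
    linear_combination hquad
  have hint : IsIntegral E (x * y) := ⟨q, hqmonic, hqeval⟩
  -- E⟮s⟯ = ⊤
  have humm : u ∈ IntermediateField.adjoin E {x * y} :=
    (IntermediateField.adjoin E {x * y}).algebraMap_mem ⟨u, hum⟩
  have hvmm : v ∈ IntermediateField.adjoin E {x * y} :=
    (IntermediateField.adjoin E {x * y}).algebraMap_mem ⟨v, hvm⟩
  have hAmm : A ∈ IntermediateField.adjoin E {x * y} :=
    (IntermediateField.adjoin E {x * y}).algebraMap_mem ⟨A, hAm⟩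
  have hBmm : B ∈ IntermediateField.adjoin E {x * y} :=
    (IntermediateField.adjoin E {x * y}).algebraMap_mem ⟨B, hBm⟩
  have hsmm : x * y ∈ IntermediateField.adjoin E {x * y} :=
    IntermediateField.subset_adjoin E {x * y} rfl
  have hxmem : x ∈ IntermediateField.adjoin E {x * y} := by
    have h := add_mem (mul_mem humm hsmm) (mul_mem hAmm hvmm)
    rwa [← hX] at h
  have hymem : y ∈ IntermediateField.adjoin E {x * y} := by
    have h := add_mem (mul_mem hBmm humm) (mul_mem hvmm hsmm)
    rwa [← hY] at h
  have htop : IntermediateField.adjoin E {x * y} = ⊤ := by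
    apply IntermediateField.restrictScalars_injective K
    rw [IntermediateField.restrictScalars_top]
    apply top_le_iff.mp
    rw [← hgen]
    apply IntermediateField.adjoin_le_iff.mpr
    rintro z hz
    rcases hz with rfl | hz
    · exact hxmem
    · rw [Set.mem_singleton_iff] at hz
      subst hz
      exact hymem
  -- finite dimensionality and rank bound for F over E
  haveI hfd0 : FiniteDimensional E (IntermediateField.adjoin E {x * y}) :=
    IntermediateField.adjoin.finiteDimensional hint
  have hrank0 : Module.finrank E (IntermediateField.adjoin E {x * y}) ≤ 2 := by
    rw [IntermediateField.adjoin.finrank hint]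
    exact le_trans (Polynomial.natDegree_le_natDegree (minpoly.min E (x * y) hqmonic hqeval)) hqdeg
  haveI hfdE : FiniteDimensional E F := by
    rw [htop] at hfd0
    exact Module.Finite.equiv IntermediateField.topEquiv.toLinearEquiv
  have hrankE : Module.finrank E F ≤ 2 := by
    rw [htop] at hrank0
    rwa [IntermediateField.topEquiv.toLinearEquiv.finrank_eq] at hrank0
  -- σ has order 2
  have key1 : ∀ τ : F ≃ₐ[K] F, τ x = x → τ y = y → τ = 1 := by
    intro τ h1 h2
    ext z
    have hz : z ∈ (⊤ : IntermediateField K F) := trivial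
    rw [← hgen] at hz
    have hle : IntermediateField.adjoin K {x, y} ≤
        IntermediateField.fixedField (Subgroup.zpowers τ) := by
      apply IntermediateField.adjoin_le_iff.mpr
      rintro w hw
      rcases hw with rfl | hw
      · exact mem_fixedField_of_fixed τ h1
      · rw [Set.mem_singleton_iff] at hw
        subst hw
        exact mem_fixedField_of_fixed τ h2
    exact hle hz ⟨τ, Subgroup.mem_zpowers τ⟩
  have hσ2 : σ * σ = 1 := by
    apply key1
    · rw [AlgEquiv.mul_apply, hx, map_div₀, hsA, hx]
      field_simp
    · rw [AlgEquiv.mul_apply, hy, map_div₀, hsB, hy]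
      field_simp
  have hσ1 : σ ≠ 1 := by
    intro h
    rw [h] at hx
    simp only [AlgEquiv.one_apply] at hx
    apply hx2
    field_simp at hx
    rw [sq]
    linear_combination hx
  have horder : orderOf σ = 2 := by
    apply orderOf_eq_prime
    · rw [sq]; exact hσ2
    · exact hσ1
  have hcard : Nat.card (Subgroup.zpowers σ) = 2 := by
    rw [Nat.card_zpowers, horder]
  haveI hfin : Finite (Subgroup.zpowers σ) :=
    Nat.finite_of_card_ne_zero (by rw [hcard]; norm_num)
  haveI : Fintype (Subgroup.zpowers σ) := Fintype.ofFinite _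
  have hrankL : Module.finrank L F = 2 := by
    have := FixedPoints.finrank_eq_card (Subgroup.zpowers σ) F
    rw [← Nat.card_eq_fintype_card, hcard] at this
    exact this
  -- E ≤ L
  have hEL : E ≤ L := by
    apply IntermediateField.adjoin_le_iff.mpr
    rintro w hw
    rcases hw with rfl | hw
    · exact mem_fixedField_of_fixed σ hsu
    · rw [Set.mem_singleton_iff] at hw
      subst hw
      exact mem_fixedField_of_fixed σ hsv
  symm
  exact IntermediateField.eq_of_le_of_finrank_le' hEL (by rw [hrankL]; exact hrankE)
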